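/- arXiv:2605.29477 — 2 statements merged into one kernel-verified Lean document; each statement's English description precedes it below -/
import Mathlib

section
/- Let (X_t)_{t∈ℕ} be an integrable random process over ℝ_{≥0}, adapted to a filtration (𝓕_t)_{t∈ℕ}. Let x_min > 0 and T = inf{t ∈ ℕ : X_t < x_min}. Let t' ∈ ℕ ∪ {∞}, and let (A_s)_{s∈[0..t']} be a collection of events. Assume there is δ ∈ (0,1) such that for all t ∈ [0..t'], E[(X_t − X_{t+1})·1{t < T and ∩_{s∈[0..t']} A_s} | 𝓕_t] ≥ δ·X_t·1{t < T}·P(∩_{s∈[0..t']} A_s | 𝓕_t). Then for all t ∈ [0..t']: P(T > t) ≤ P(X_t·1{t < T} ≥ x_min and ∪_{s∈[0..t']} A_s^c) + (1−δ)^t · E[X_0·1{T > 0 and ∩_{s∈[0..t']} A_s}] / x_min ≤ P(∪_{s∈[0..t']} A_s^c) + (1−δ)^t · E[X_0·1{T > 0}] / x_min. -/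
open MeasureTheory

/-- Multiplying by a 0/1 indicator equals indicator of the function. -/
lemma mul_indicator_one_eq {Ω : Type*} (f : Ω → ℝ) (S : Set Ω) :
    (fun ω => f ω * Set.indicator S (fun _ => (1 : ℝ)) ω) = S.indicator f := by
  funext ω
  by_cases h : ω ∈ S
  · simp [Set.indicator_of_mem h]
  · simp [Set.indicator_of_notMem h]

/-- multiplicative drift with failure events, main inequalities.
Let `(X_t)` be an integrable, nonnegative process adapted to `(𝓕_t)`, `x_min > 0`,
`T = inf{t : X_t < x_min}`, `t' ∈ ℕ ∪ {∞}`, `(A_s)_{s ∈ [0..t']}` events, and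
`δ ∈ (0,1)` such that for all `t ∈ [0..t']`,
`E[(X_t − X_{t+1})·1{t < T ∧ ∩ A_s} | 𝓕_t] ≥ δ·X_t·1{t < T}·P(∩ A_s | 𝓕_t)`.
Then for all `t ∈ [0..t']`,
`P(T > t) ≤ P(X_t·1{t<T} ≥ x_min ∧ ∪ A_sᶜ) + (1−δ)^t·E[X_0·1{T>0 ∧ ∩ A_s}]/x_min`
`        ≤ P(∪ A_sᶜ) + (1−δ)^t·E[X_0·1{T>0}]/x_min`. -/
theorem stmt_0 {Ω : Type*} {m : MeasurableSpace Ω} (μ : Measure Ω) [IsProbabilityMeasure μ]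
    (ℱ : Filtration ℕ m) (X : ℕ → Ω → ℝ)
    (hX_int : ∀ t, Integrable (X t) μ)
    (hX_adapted : Adapted ℱ X)
    (hX_nonneg : ∀ t ω, 0 ≤ X t ω)
    (xmin : ℝ) (hxmin : 0 < xmin)
    (T : Ω → ℕ∞)
    (hT : ∀ ω, T ω = sInf {s : ℕ∞ | ∃ k : ℕ, s = (k : ℕ∞) ∧ X k ω < xmin})
    (t' : ℕ∞) (A : ℕ → Set Ω) (hA : ∀ s, MeasurableSet (A s))
    (Aall : Set Ω) (hAall : Aall = ⋂ s ∈ {s : ℕ | (s : ℕ∞) ≤ t'}, A s)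
    (δ : ℝ) (hδ : δ ∈ Set.Ioo (0 : ℝ) 1)
    (hdrift : ∀ t : ℕ, (t : ℕ∞) ≤ t' →
      ∀ᵐ ω ∂μ,
        δ * X t ω * Set.indicator {ω' | (t : ℕ∞) < T ω'} (fun _ => (1 : ℝ)) ω *
            (μ[Set.indicator Aall (fun _ => (1 : ℝ)) | ℱ t]) ω ≤
          (μ[fun ω' => (X t ω' - X (t + 1) ω') *
              Set.indicator ({ω'' | (t : ℕ∞) < T ω''} ∩ Aall) (fun _ => (1 : ℝ)) ω'
            | ℱ t]) ω) :
    ∀ t : ℕ, (t : ℕ∞) ≤ t' →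
      (μ {ω | (t : ℕ∞) < T ω}).toReal ≤
          (μ ({ω | xmin ≤ X t ω *
                Set.indicator {ω' | (t : ℕ∞) < T ω'} (fun _ => (1 : ℝ)) ω} ∩
              ⋃ s ∈ {s : ℕ | (s : ℕ∞) ≤ t'}, (A s)ᶜ)).toReal +
            (1 - δ) ^ t *
              (∫ ω, X 0 ω * Set.indicator ({ω' | 0 < T ω'} ∩ Aall) (fun _ => (1 : ℝ)) ω ∂μ) /
              xmin ∧
        (μ ({ω | xmin ≤ X t ω *
              Set.indicator {ω' | (t : ℕ∞) < T ω'} (fun _ => (1 : ℝ)) ω} ∩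
            ⋃ s ∈ {s : ℕ | (s : ℕ∞) ≤ t'}, (A s)ᶜ)).toReal +
          (1 - δ) ^ t *
            (∫ ω, X 0 ω * Set.indicator ({ω' | 0 < T ω'} ∩ Aall) (fun _ => (1 : ℝ)) ω ∂μ) /
            xmin ≤
        (μ (⋃ s ∈ {s : ℕ | (s : ℕ∞) ≤ t'}, (A s)ᶜ)).toReal +
          (1 - δ) ^ t *
            (∫ ω, X 0 ω * Set.indicator {ω' | 0 < T ω'} (fun _ => (1 : ℝ)) ω ∂μ) / xmin := by
  obtain ⟨hδ0, hδ1⟩ := hδ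
  -- characterization of {t < T}
  have hTiff : ∀ (t : ℕ) ω, ((t : ℕ∞) < T ω ↔ ∀ k ≤ t, xmin ≤ X k ω) := by
    intro t ω
    rw [hT ω]
    by_cases hN : {k : ℕ | X k ω < xmin}.Nonempty
    · have hmem : ((sInf {k : ℕ | X k ω < xmin} : ℕ) : ℕ∞) ∈
          {s : ℕ∞ | ∃ k : ℕ, s = (k : ℕ∞) ∧ X k ω < xmin} :=
        ⟨_, rfl, Nat.sInf_mem hN⟩
      have h1 : sInf {s : ℕ∞ | ∃ k : ℕ, s = (k : ℕ∞) ∧ X k ω < xmin} =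
          ((sInf {k : ℕ | X k ω < xmin} : ℕ) : ℕ∞) := by
        refine le_antisymm (sInf_le hmem) (le_sInf ?_)
        rintro s ⟨k, rfl, hk⟩
        exact_mod_cast Nat.sInf_le hk
      rw [h1, Nat.cast_lt]
      constructor
      · intro h k hk
        by_contra hlt
        have hk2 : X k ω < xmin := lt_of_not_ge hlt
        have := Nat.sInf_le (show k ∈ {k : ℕ | X k ω < xmin} from hk2)
        omega
      · intro h
        by_contra hle
        push_neg at hle
        have hmem' := Nat.sInf_mem hN
        exact absurd (h _ hle) (not_le.mpr hmem')
    · have hempty : {s : ℕ∞ | ∃ k : ℕ, s = (k : ℕ∞) ∧ X k ω < xmin} = ∅ := by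
        ext s
        simp only [Set.mem_setOf_eq, Set.mem_empty_iff_false, iff_false]
        rintro ⟨k, rfl, hk⟩
        exact hN ⟨k, hk⟩
      rw [hempty, sInf_empty]
      constructor
      · intro _ k _
        by_contra h
        exact hN ⟨k, not_le.mp h⟩
      · intro _
        exact Ne.lt_top (by simp)
  -- the sets {t < T}
  set ST : ℕ → Set Ω := fun t => {ω | (t : ℕ∞) < T ω} with hST_def
  have hST_eq : ∀ t : ℕ, ST t = ⋂ k ∈ Finset.range (t + 1), {ω | xmin ≤ X k ω} := by
    intro t
    ext ω
    simp only [hST_def, Set.mem_setOf_eq, Set.mem_iInter, Finset.mem_range, hTiff]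
    constructor
    · intro h k hk; exact h k (by omega)
    · intro h k hk; exact h k (by omega)
  have hST_meas : ∀ t : ℕ, MeasurableSet[ℱ t] (ST t) := by
    intro t
    rw [hST_eq]
    refine MeasurableSet.biInter (Finset.range (t + 1)).countable_toSet ?_
    intro k hk
    have hk' : k ≤ t := Nat.lt_succ_iff.mp (Finset.mem_range.mp hk)
    have : MeasurableSet[ℱ k] {ω | xmin ≤ X k ω} :=
      measurableSet_le measurable_const (hX_adapted k)
    exact ℱ.mono hk' _ this
  have hST_meas' : ∀ t : ℕ, MeasurableSet (ST t) := fun t => ℱ.le t _ (hST_meas t)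
  have hAall_meas : MeasurableSet Aall := by
    rw [hAall]
    exact MeasurableSet.biInter (Set.to_countable _) fun s _ => hA s
  have hST_mono : ∀ t : ℕ, ST (t + 1) ⊆ ST t := by
    intro t ω hω
    rw [Set.mem_setOf_eq, hTiff] at hω ⊢
    intro k hk; exact hω k (by omega)
  have hST0 : ∀ t : ℕ, ST t ⊆ ST 0 := by
    intro t
    induction t with
    | zero => exact fun ω h => h
    | succ n ih => exact fun ω h => ih (hST_mono n h)
  -- integrability of indicator-truncated processes
  have hint : ∀ (t : ℕ) (S : Set Ω), MeasurableSet S → Integrable (S.indicator (X t)) μ :=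
    fun t S hS => (hX_int t).indicator hS
  -- the key quantity
  set I : ℕ → ℝ := fun t => ∫ ω, (ST t ∩ Aall).indicator (X t) ω ∂μ with hI_def
  have hI_nonneg : ∀ t, 0 ≤ I t := by
    intro t
    apply integral_nonneg
    intro ω
    exact Set.indicator_nonneg (fun ω' _ => hX_nonneg t ω') ω
  -- drift step
  have hstep : ∀ t : ℕ, (t : ℕ∞) ≤ t' → I (t + 1) ≤ (1 - δ) * I t := by
    intro t ht
    have hdr := hdrift t ht
    -- f = δ * X t * 1_{ST t}, g = 1_{Aall}
    set f : Ω → ℝ := fun ω => δ * X t ω * Set.indicator (ST t) (fun _ => (1 : ℝ)) ω with hf_def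
    set g : Ω → ℝ := Set.indicator Aall (fun _ => (1 : ℝ)) with hg_def
    have hf_sm : StronglyMeasurable[ℱ t] f := by
      apply StronglyMeasurable.mul
      · exact ((hX_adapted t).const_mul δ).stronglyMeasurable
      · exact stronglyMeasurable_const.indicator (hST_meas t)
    have hg_int : Integrable g μ := by
      refine (integrable_const (1 : ℝ)).indicator hAall_meas
    have hfg_eq : f * g = fun ω => δ * ((ST t ∩ Aall).indicator (X t) ω) := by
      funext ω
      simp only [hf_def, hg_def, Pi.mul_apply]
      by_cases h1 : ω ∈ ST t <;> by_cases h2 : ω ∈ Aall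
      · rw [Set.indicator_of_mem h1, Set.indicator_of_mem h2,
          Set.indicator_of_mem (Set.mem_inter h1 h2)]
        ring
      · rw [Set.indicator_of_mem h1, Set.indicator_of_notMem h2,
          Set.indicator_of_notMem (fun h => h2 (Set.mem_of_mem_inter_right h))]
        ring
      · rw [Set.indicator_of_notMem h1,
          Set.indicator_of_notMem (fun h => h1 (Set.mem_of_mem_inter_left h))]
        ring
      · rw [Set.indicator_of_notMem h1,
          Set.indicator_of_notMem (fun h => h1 (Set.mem_of_mem_inter_left h))]
        ring
    have hfg_int : Integrable (f * g) μ := by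
      rw [hfg_eq]
      exact (hint t _ ((hST_meas' t).inter hAall_meas)).const_mul δ
    have hpull : μ[f * g | ℱ t] =ᵐ[μ] f * μ[g | ℱ t] :=
      condExp_mul_of_stronglyMeasurable_left hf_sm hfg_int hg_int
    -- h function
    set h : Ω → ℝ := fun ω' => (X t ω' - X (t + 1) ω') *
        Set.indicator ({ω'' | (t : ℕ∞) < T ω''} ∩ Aall) (fun _ => (1 : ℝ)) ω' with hh_def
    have hh_eq : h = (ST t ∩ Aall).indicator (fun ω => X t ω - X (t + 1) ω) := by
      rw [hh_def]
      exact mul_indicator_one_eq _ _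
    have hh_int : Integrable h μ := by
      rw [hh_eq]
      exact ((hX_int t).sub (hX_int (t + 1))).indicator ((hST_meas' t).inter hAall_meas)
    -- integrate the drift inequality
    have hlhs_int : Integrable (f * μ[g | ℱ t]) μ := (integrable_condExp).congr hpull
    have hrhs_int : Integrable (μ[h | ℱ t]) μ := integrable_condExp
    have hmono : ∫ ω, (f * μ[g | ℱ t]) ω ∂μ ≤ ∫ ω, (μ[h | ℱ t]) ω ∂μ := by
      apply integral_mono_ae hlhs_int hrhs_int
      filter_upwards [hdr] with ω hω
      exact hω
    have hL : ∫ ω, (f * μ[g | ℱ t]) ω ∂μ = δ * I t := by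
      rw [integral_congr_ae hpull.symm, integral_condExp (ℱ.le t), hfg_eq,
        integral_const_mul]
    have hR : ∫ ω, (μ[h | ℱ t]) ω ∂μ =
        (∫ ω, (ST t ∩ Aall).indicator (X t) ω ∂μ) -
          ∫ ω, (ST t ∩ Aall).indicator (X (t + 1)) ω ∂μ := by
      rw [integral_condExp (ℱ.le t), hh_eq]
      rw [show ((ST t ∩ Aall).indicator (fun ω => X t ω - X (t + 1) ω)) =
          fun ω => (ST t ∩ Aall).indicator (X t) ω - (ST t ∩ Aall).indicator (X (t + 1)) ω by
        funext ω
        by_cases hmem : ω ∈ ST t ∩ Aall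
        · simp [Set.indicator_of_mem hmem]
        · simp [Set.indicator_of_notMem hmem]]
      exact integral_sub (hint t _ ((hST_meas' t).inter hAall_meas))
        (hint (t + 1) _ ((hST_meas' t).inter hAall_meas))
    rw [hL, hR] at hmono
    have hJ : ∫ ω, (ST (t + 1) ∩ Aall).indicator (X (t + 1)) ω ∂μ ≤
        ∫ ω, (ST t ∩ Aall).indicator (X (t + 1)) ω ∂μ := by
      apply integral_mono (hint (t + 1) _ ((hST_meas' (t + 1)).inter hAall_meas))
        (hint (t + 1) _ ((hST_meas' t).inter hAall_meas))
      intro ω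
      exact Set.indicator_le_indicator_of_subset
        (Set.inter_subset_inter_left _ (hST_mono t)) (fun a => hX_nonneg (t + 1) a) ω
    calc I (t + 1) ≤ ∫ ω, (ST t ∩ Aall).indicator (X (t + 1)) ω ∂μ := hJ
      _ ≤ (1 - δ) * I t := by simp only [hI_def] at hmono ⊢; linarith
  -- induction
  have hind : ∀ t : ℕ, (t : ℕ∞) ≤ t' → I t ≤ (1 - δ) ^ t * I 0 := by
    intro t
    induction t with
    | zero => intro _; simp
    | succ n ih =>
      intro hn
      have hn' : (n : ℕ∞) ≤ t' := le_trans (by exact_mod_cast Nat.le_succ n) hn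
      calc I (n + 1) ≤ (1 - δ) * I n := hstep n hn'
        _ ≤ (1 - δ) * ((1 - δ) ^ n * I 0) := by
            apply mul_le_mul_of_nonneg_left (ih hn') (by linarith)
        _ = (1 - δ) ^ (n + 1) * I 0 := by ring
  -- Markov
  have hMarkov : ∀ t : ℕ, (μ (ST t ∩ Aall)).toReal * xmin ≤ I t := by
    intro t
    have h1 : ∫ ω, (ST t ∩ Aall).indicator (fun _ => xmin) ω ∂μ ≤ I t := by
      apply integral_mono ((integrable_const xmin).indicator ((hST_meas' t).inter hAall_meas))
        (hint t _ ((hST_meas' t).inter hAall_meas))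
      intro ω
      by_cases hmem : ω ∈ ST t ∩ Aall
      · rw [Set.indicator_of_mem hmem, Set.indicator_of_mem hmem]
        exact (hTiff t ω).mp hmem.1 t le_rfl
      · rw [Set.indicator_of_notMem hmem, Set.indicator_of_notMem hmem]
    rw [integral_indicator_const xmin ((hST_meas' t).inter hAall_meas),
      smul_eq_mul] at h1
    exact h1
  -- compl of Aall
  have hAallc : Aallᶜ = ⋃ s ∈ {s : ℕ | (s : ℕ∞) ≤ t'}, (A s)ᶜ := by
    rw [hAall]
    simp [Set.compl_iInter]
  -- main argument
  intro t ht
  set B : Set Ω := {ω | xmin ≤ X t ω *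
      Set.indicator {ω' | (t : ℕ∞) < T ω'} (fun _ => (1 : ℝ)) ω} ∩
      ⋃ s ∈ {s : ℕ | (s : ℕ∞) ≤ t'}, (A s)ᶜ with hB_def
  have hI0_eq : (∫ ω, X 0 ω * Set.indicator ({ω' | 0 < T ω'} ∩ Aall) (fun _ => (1 : ℝ)) ω ∂μ)
      = I 0 := by
    rw [hI_def]
    congr 1
    rw [← mul_indicator_one_eq (X 0) (ST 0 ∩ Aall)]
    rfl
  have hsplit : (μ (ST t)).toReal =
      (μ (ST t ∩ Aallᶜ)).toReal + (μ (ST t ∩ Aall)).toReal := by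
    rw [← ENNReal.toReal_add (measure_ne_top μ _) (measure_ne_top μ _)]
    congr 1
    rw [← measure_inter_add_diff (ST t) hAall_meas, Set.diff_eq, add_comm]
  have hsub : ST t ∩ Aallᶜ ⊆ B := by
    rintro ω ⟨hω1, hω2⟩
    constructor
    · show xmin ≤ X t ω * _
      rw [Set.indicator_of_mem hω1, mul_one]
      exact (hTiff t ω).mp hω1 t le_rfl
    · rw [← hAallc]; exact hω2
  have hfirst : (μ (ST t)).toReal ≤ (μ B).toReal + (1 - δ) ^ t * I 0 / xmin := by
    rw [hsplit]
    have h1 : (μ (ST t ∩ Aallᶜ)).toReal ≤ (μ B).toReal :=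
      ENNReal.toReal_mono (measure_ne_top μ _) (measure_mono hsub)
    have h2 : (μ (ST t ∩ Aall)).toReal ≤ (1 - δ) ^ t * I 0 / xmin := by
      rw [le_div_iff₀ hxmin]
      exact (hMarkov t).trans (hind t ht)
    linarith
  constructor
  · rw [hI0_eq]
    exact hfirst
  · rw [hI0_eq]
    have h1 : (μ B).toReal ≤ (μ (⋃ s ∈ {s : ℕ | (s : ℕ∞) ≤ t'}, (A s)ᶜ)).toReal :=
      ENNReal.toReal_mono (measure_ne_top μ _) (measure_mono Set.inter_subset_right)
    have h2 : I 0 ≤ ∫ ω, X 0 ω * Set.indicator {ω' | 0 < T ω'} (fun _ => (1 : ℝ)) ω ∂μ := by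
      rw [mul_indicator_one_eq (X 0) {ω' | 0 < T ω'}]
      apply integral_mono (hint 0 _ ((hST_meas' 0).inter hAall_meas))
        (hint 0 _ (by exact hST_meas' 0))
      intro ω
      exact Set.indicator_le_indicator_of_subset Set.inter_subset_left
        (fun a => hX_nonneg 0 a) ω
    have h3 : (1 - δ) ^ t * I 0 / xmin ≤
        (1 - δ) ^ t * (∫ ω, X 0 ω * Set.indicator {ω' | 0 < T ω'} (fun _ => (1 : ℝ)) ω ∂μ) /
          xmin := by
      have hδp : (0:ℝ) ≤ (1 - δ) ^ t := pow_nonneg (by linarith) t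
      gcongr
    linarith
end

section
/- Let ρ ∈ ℕ, m ∈ ℕ_{≥1}, ρ⁺ = max{1, ρ}, and let q : [1..mρ⁺] → ℝ_{≥0} be arbitrary. Let M ∈ ℝ_{≥0} be such that ∑_{i∈[1..mρ⁺]} q(i) = M. Then ∑_{d=0}^{ρ} ∑_{i=1}^{mρ⁺−d} q(i)·q(i+d) ≥ M²/(2m). -/
lemma blocks_sum (r m : ℕ) (f : ℕ → ℝ) :
    ∑ b ∈ Finset.range m, ∑ i ∈ Finset.Ioc (b * r) (b * r + r), f i
      = ∑ i ∈ Finset.Ioc 0 (m * r), f i := by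
  induction m with
  | zero => simp
  | succ n ih =>
    rw [Finset.sum_range_succ, ih, Nat.succ_mul]
    exact Finset.sum_Ioc_consecutive f (Nat.zero_le _) (Nat.le_add_right _ _)

lemma half_sq (a b : ℕ) (f : ℕ → ℝ) (hf : ∀ i ∈ Finset.Ioc a b, 0 ≤ f i) :
    (∑ i ∈ Finset.Ioc a b, f i) ^ 2
      ≤ 2 * ∑ i ∈ Finset.Ioc a b, ∑ j ∈ Finset.Icc i b, f i * f j := by
  set s := Finset.Ioc a b with hs
  have hsq : (∑ i ∈ s, f i) ^ 2 = ∑ p ∈ s ×ˢ s, f p.1 * f p.2 := by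
    rw [sq, Finset.sum_mul_sum, Finset.sum_product]
  have htri : ∑ p ∈ (s ×ˢ s).filter (fun p => p.1 ≤ p.2), f p.1 * f p.2
      = ∑ i ∈ s, ∑ j ∈ Finset.Icc i b, f i * f j := by
    apply Finset.sum_finset_product
    intro p
    simp only [Finset.mem_filter, Finset.mem_product, hs, Finset.mem_Ioc, Finset.mem_Icc]
    omega
  have hswap : ∑ p ∈ (s ×ˢ s).filter (fun p => ¬ p.1 ≤ p.2), f p.1 * f p.2
      ≤ ∑ p ∈ (s ×ˢ s).filter (fun p => p.1 ≤ p.2), f p.1 * f p.2 := by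
    have h1 : ∑ p ∈ (s ×ˢ s).filter (fun p => ¬ p.1 ≤ p.2), f p.1 * f p.2
        = ∑ p ∈ (s ×ˢ s).filter (fun p => p.2 < p.1), f p.1 * f p.2 := by
      apply Finset.sum_congr _ (fun _ _ => rfl)
      apply Finset.filter_congr
      intro p _
      simp [not_le]
    rw [h1]
    have h2 : ∑ p ∈ (s ×ˢ s).filter (fun p => p.2 < p.1), f p.1 * f p.2
        = ∑ p ∈ (s ×ˢ s).filter (fun p => p.1 < p.2), f p.1 * f p.2 := by
      apply Finset.sum_nbij' (i := Prod.swap) (j := Prod.swap)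
      · intro p hp
        simp only [Finset.mem_filter, Finset.mem_product] at hp ⊢
        exact ⟨⟨hp.1.2, hp.1.1⟩, hp.2⟩
      · intro p hp
        simp only [Finset.mem_filter, Finset.mem_product] at hp ⊢
        exact ⟨⟨hp.1.2, hp.1.1⟩, hp.2⟩
      · intro p _; rfl
      · intro p _; rfl
      · intro p _
        exact mul_comm _ _
    rw [h2]
    apply Finset.sum_le_sum_of_subset_of_nonneg
    · intro p hp
      simp only [Finset.mem_filter] at hp ⊢
      exact ⟨hp.1, le_of_lt hp.2⟩
    · intro p hp _
      simp only [Finset.mem_filter, Finset.mem_product] at hp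
      exact mul_nonneg (hf _ hp.1.1) (hf _ hp.1.2)
  have := Finset.sum_filter_add_sum_filter_not (s ×ˢ s) (fun p => p.1 ≤ p.2)
      (fun p => f p.1 * f p.2)
  rw [hsq, ← this, ← htri]
  nlinarith [hswap]

lemma block_reindex (ρ r c : ℕ) (hr : 1 ≤ r) (hrρ : r ≤ ρ + 1) (f : ℕ → ℕ → ℝ) :
    ∑ d ∈ Finset.Icc 0 ρ, ∑ i ∈ Finset.Ioc c (c + (r - d)), f i (i + d)
      = ∑ i ∈ Finset.Ioc c (c + r), ∑ j ∈ Finset.Icc i (c + r), f i j := by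
  rw [Finset.sum_sigma', Finset.sum_sigma']
  apply Finset.sum_nbij' (i := fun p => (⟨p.2, p.2 + p.1⟩ : Σ _ : ℕ, ℕ))
    (j := fun p => (⟨p.2 - p.1, p.1⟩ : Σ _ : ℕ, ℕ))
  · rintro ⟨d, i⟩ hp
    simp only [Finset.mem_sigma, Finset.mem_Icc, Finset.mem_Ioc] at hp ⊢
    omega
  · rintro ⟨i, j⟩ hp
    simp only [Finset.mem_sigma, Finset.mem_Icc, Finset.mem_Ioc] at hp ⊢
    omega
  · rintro ⟨d, i⟩ hp
    simp
  · rintro ⟨i, j⟩ hp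
    simp only [Finset.mem_sigma, Finset.mem_Icc, Finset.mem_Ioc] at hp
    simp [Nat.add_sub_cancel' hp.2.1]
  · rintro ⟨d, i⟩ hp
    rfl

lemma subblocks_le (m r d : ℕ) (h : ℕ → ℝ)
    (hh : ∀ i ∈ Finset.Ioc 0 (m * r - d), 0 ≤ h i) :
    ∑ b ∈ Finset.range m, ∑ i ∈ Finset.Ioc (b * r) (b * r + (r - d)), h i
      ≤ ∑ i ∈ Finset.Ioc 0 (m * r - d), h i := by
  have hdisj : Set.PairwiseDisjoint ↑(Finset.range m)
      (fun b => Finset.Ioc (b * r) (b * r + (r - d))) := by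
    intro b _ c _ hbc
    apply Finset.disjoint_left.2
    intro i hi1 hi2
    simp only [Finset.mem_Ioc] at hi1 hi2
    rcases Nat.lt_or_ge b c with h' | h'
    · have : (b + 1) * r ≤ c * r := Nat.mul_le_mul_right r h'
      rw [Nat.succ_mul] at this
      omega
    · rcases Nat.lt_or_ge c b with h'' | h''
      · have : (c + 1) * r ≤ b * r := Nat.mul_le_mul_right r h''
        rw [Nat.succ_mul] at this
        omega
      · omega
  rw [← Finset.sum_biUnion hdisj]
  apply Finset.sum_le_sum_of_subset_of_nonneg
  · intro i hi
    simp only [Finset.mem_biUnion, Finset.mem_range, Finset.mem_Ioc] at hi ⊢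
    obtain ⟨b, hb, hi1, hi2⟩ := hi
    have : (b + 1) * r ≤ m * r := Nat.mul_le_mul_right r hb
    rw [Nat.succ_mul] at this
    omega
  · intro i hi _
    exact hh i hi

/-- Let `ρ ∈ ℕ`, `m ∈ ℕ_{≥1}`, `ρ⁺ = max 1 ρ`, and let `q : [1..mρ⁺] → ℝ_{≥0}` be arbitrary.
Let `M ∈ ℝ_{≥0}` be such that `∑_{i ∈ [1..mρ⁺]} q i = M`. Then
`∑_{d=0}^{ρ} ∑_{i=1}^{mρ⁺−d} q i * q (i+d) ≥ M² / (2m)`. -/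
theorem stmt_2 (ρ m : ℕ) (hm : 1 ≤ m) (q : ℕ → ℝ)
    (hq : ∀ i ∈ Finset.Icc 1 (m * max 1 ρ), 0 ≤ q i)
    (M : ℝ) (hM : 0 ≤ M)
    (hsum : ∑ i ∈ Finset.Icc 1 (m * max 1 ρ), q i = M) :
    M ^ 2 / (2 * m) ≤
      ∑ d ∈ Finset.Icc 0 ρ, ∑ i ∈ Finset.Icc 1 (m * max 1 ρ - d), q i * q (i + d) := by
  set r := max 1 ρ with hrdef
  have hr1 : 1 ≤ r := le_max_left _ _
  have hrρ : r ≤ ρ + 1 := by omega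
  have hIcc : ∀ n : ℕ, Finset.Icc 1 n = Finset.Ioc 0 n := fun n => Finset.Icc_add_one_left_eq_Ioc 0 n
  have hq' : ∀ i ∈ Finset.Ioc 0 (m * r), 0 ≤ q i := by
    intro i hi; exact hq i (by rwa [hIcc])
  have hsum' : ∑ b ∈ Finset.range m, ∑ i ∈ Finset.Ioc (b * r) (b * r + r), q i = M := by
    rw [blocks_sum, ← hIcc, hsum]
  -- Cauchy–Schwarz over blocks
  have hCS : M ^ 2 ≤ (m : ℝ) * ∑ b ∈ Finset.range m,
      (∑ i ∈ Finset.Ioc (b * r) (b * r + r), q i) ^ 2 := by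
    have := sq_sum_le_card_mul_sum_sq (s := Finset.range m)
      (f := fun b => ∑ i ∈ Finset.Ioc (b * r) (b * r + r), q i)
    rw [hsum', Finset.card_range] at this
    exact_mod_cast this
  -- per-block bound
  have hblock : ∀ b ∈ Finset.range m,
      (∑ i ∈ Finset.Ioc (b * r) (b * r + r), q i) ^ 2
        ≤ 2 * ∑ d ∈ Finset.Icc 0 ρ, ∑ i ∈ Finset.Ioc (b * r) (b * r + (r - d)),
            q i * q (i + d) := by
    intro b hb
    simp only [Finset.mem_range] at hb
    have hsubset : (b + 1) * r ≤ m * r := Nat.mul_le_mul_right r hb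
    rw [Nat.succ_mul] at hsubset
    have hnn : ∀ i ∈ Finset.Ioc (b * r) (b * r + r), 0 ≤ q i := by
      intro i hi
      simp only [Finset.mem_Ioc] at hi
      exact hq' i (by simp only [Finset.mem_Ioc]; omega)
    rw [block_reindex ρ r (b * r) hr1 hrρ (fun i j => q i * q j)]
    exact half_sq (b * r) (b * r + r) q hnn
  have hsum2 : ∑ b ∈ Finset.range m, ∑ d ∈ Finset.Icc 0 ρ,
      ∑ i ∈ Finset.Ioc (b * r) (b * r + (r - d)), q i * q (i + d)
      ≤ ∑ d ∈ Finset.Icc 0 ρ, ∑ i ∈ Finset.Icc 1 (m * r - d), q i * q (i + d) := by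
    rw [Finset.sum_comm]
    apply Finset.sum_le_sum
    intro d _
    rw [hIcc]
    apply subblocks_le
    intro i hi
    simp only [Finset.mem_Ioc] at hi
    have h1 : 0 ≤ q i := hq' i (by simp only [Finset.mem_Ioc]; omega)
    have h2 : 0 ≤ q (i + d) := hq' (i + d) (by simp only [Finset.mem_Ioc]; omega)
    exact mul_nonneg h1 h2
  have hfinal : M ^ 2 ≤ (m : ℝ) * (2 * ∑ d ∈ Finset.Icc 0 ρ,
      ∑ i ∈ Finset.Icc 1 (m * r - d), q i * q (i + d)) := by
    calc M ^ 2 ≤ (m : ℝ) * ∑ b ∈ Finset.range m,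
        (∑ i ∈ Finset.Ioc (b * r) (b * r + r), q i) ^ 2 := hCS
      _ ≤ (m : ℝ) * ∑ b ∈ Finset.range m, (2 * ∑ d ∈ Finset.Icc 0 ρ,
          ∑ i ∈ Finset.Ioc (b * r) (b * r + (r - d)), q i * q (i + d)) := by
        apply mul_le_mul_of_nonneg_left _ (by positivity)
        exact Finset.sum_le_sum hblock
      _ = (m : ℝ) * (2 * ∑ b ∈ Finset.range m, ∑ d ∈ Finset.Icc 0 ρ,
          ∑ i ∈ Finset.Ioc (b * r) (b * r + (r - d)), q i * q (i + d)) := by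
        rw [← Finset.mul_sum]
      _ ≤ (m : ℝ) * (2 * ∑ d ∈ Finset.Icc 0 ρ,
          ∑ i ∈ Finset.Icc 1 (m * r - d), q i * q (i + d)) := by
        apply mul_le_mul_of_nonneg_left _ (by positivity)
        linarith [hsum2]
  have hm' : (0 : ℝ) < 2 * m := by positivity
  rw [div_le_iff₀ hm']
  linarith [hfinal]
end
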